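/- Let X = L* + S* with S* supported on Λ* ⊆ Ω ⊆ [n1]×[n2]. Suppose that for every row i, the number of corrupted entries satisfies |Λ*_{(i,·)}| ≤ α·r_i and for every column j, |Λ*_{(·,j)}| ≤ α·c_j, where r_i = |Ω_{(i,·)}|, c_j = |Ω_{(·,j)}|, and 0 < α < 1. Let L be any matrix and let Λ be the support of the thresholding operator T_{γα}(L − X, Ω) with over-removal factor 1 < γ ≤ 1/α, which keeps entry (i,j) ∈ Ω iff |（L−X)_{ij}| strictly exceeds both the ⌈γα·r_i⌉-th largest magnitude in row i of P_Ω(L−X) and the ⌈γα·c_j⌉-th largest magnitude in column j. Then ‖L − X‖_{F((Ω\Λ) ∩ Λ*)} ≤ √(2/(γ−1)) · ‖L − L*‖_{F(Ω)}. -/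

import Mathlib

open Matrix

noncomputable def opNorm {m n : Type*} [Fintype m] [Fintype n] [DecidableEq n]
    (A : Matrix m n ℝ) : ℝ :=
  ‖LinearMap.toContinuousLinearMap (Matrix.toEuclideanLin A)‖

noncomputable def frob {m n : Type*} [Fintype m] [Fintype n] (A : Matrix m n ℝ) : ℝ :=
  Real.sqrt (∑ i, ∑ j, (A i j) ^ 2)

noncomputable def frobS {n1 n2 : ℕ} (S : Finset (Fin n1 × Fin n2))
    (A : Matrix (Fin n1) (Fin n2) ℝ) : ℝ :=
  Real.sqrt (∑ p ∈ S, (A p.1 p.2) ^ 2)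

noncomputable def dP {m : Type*} [Fintype m] {r : ℕ}
    (Z Z' : Matrix m (Fin r) ℝ) : ℝ :=
  sInf { d | ∃ P : Matrix (Fin r) (Fin r) ℝ, Pᵀ * P = 1 ∧ d = frob (Z - Z' * P) }


/-- The `k`-th largest element of a multiset of reals (`0` if out of range). -/
noncomputable def kthLargest (m : Multiset ℝ) (k : ℕ) : ℝ :=
  (m.sort (· ≤ ·)).getD ((m.sort (· ≤ ·)).length - k) 0

open scoped Classical in
/-- The thresholding operator support `T_θ(A, Ω)`: keep `(i,j) ∈ Ω` iff `|A_{ij}|`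
strictly exceeds both the `⌈θ·r_i⌉`-th largest magnitude in row `i` of `P_Ω(A)`
and the `⌈θ·c_j⌉`-th largest magnitude in column `j` of `P_Ω(A)`. -/
noncomputable def threshSupport {n1 n2 : ℕ} (A : Matrix (Fin n1) (Fin n2) ℝ)
    (Ω : Finset (Fin n1 × Fin n2)) (θ : ℝ) : Finset (Fin n1 × Fin n2) :=
  Ω.filter fun p =>
    kthLargest (((Ω.filter fun q => q.1 = p.1).val.map fun q => |A q.1 q.2|))
        ⌈θ * ((Ω.filter fun q => q.1 = p.1).card : ℝ)⌉₊ < |A p.1 p.2| ∧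
    kthLargest (((Ω.filter fun q => q.2 = p.2).val.map fun q => |A q.1 q.2|))
        ⌈θ * ((Ω.filter fun q => q.2 = p.2).card : ℝ)⌉₊ < |A p.1 p.2|


lemma kthLargest_spec {m : Multiset ℝ} {k : ℕ} (hk1 : 1 ≤ k) (hk : k ≤ Multiset.card m) :
    kthLargest m k ∈ m ∧ k ≤ Multiset.countP (fun x => kthLargest m k ≤ x) m := by
  set l := m.sort (· ≤ ·) with hl
  have hlen : l.length = Multiset.card m := Multiset.length_sort _
  have hlt : l.length - k < l.length := by omega
  have ht : kthLargest m k = l[l.length - k] := by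
    simpa [kthLargest, ← hl] using List.getD_eq_getElem l 0 hlt
  have hsort : l.Pairwise (· ≤ ·) := Multiset.pairwise_sort (s := m) (r := (· ≤ ·))
  obtain ⟨t, htt⟩ : ∃ t, kthLargest m k = t := ⟨_, rfl⟩
  rw [htt] at ht ⊢
  have hm : Multiset.countP (fun x => t ≤ x) m
      = List.countP (fun b => decide (t ≤ b)) l := by
    conv_lhs => rw [← Multiset.sort_eq (s := m) (r := (· ≤ ·))]
    exact Multiset.coe_countP _ _
  constructor
  · rw [ht, ← Multiset.sort_eq (α := ℝ) (s := m) (r := (· ≤ ·))]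
    exact List.getElem_mem hlt
  · rw [hm]
    have hdrop : ∀ x ∈ l.drop (l.length - k), t ≤ x := by
      intro x hx
      obtain ⟨i, hi, rfl⟩ := List.mem_iff_getElem.mp hx
      rw [List.getElem_drop, ht]
      have hij : (⟨l.length - k, hlt⟩ : Fin l.length) ≤
          ⟨l.length - k + i, by simp [List.length_drop] at hi; omega⟩ := by
        simp
      exact hsort.rel_get_of_le hij
    have hcd : List.countP (fun b => decide (t ≤ b)) (l.drop (l.length - k))
        = (l.drop (l.length - k)).length := by
      rw [List.countP_eq_length]
      intro a ha
      simpa using hdrop a ha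
    calc k = (l.drop (l.length - k)).length := by rw [List.length_drop]; omega
      _ ≤ _ := by rw [← hcd]; exact (List.drop_sublist _ _).countP_le

lemma card_filter_ge {ι : Type*} (F : Finset ι) (f : ι → ℝ) {k : ℕ} (hk1 : 1 ≤ k)
    (hk : k ≤ F.card) :
    k ≤ (F.filter fun p => kthLargest (F.val.map f) k ≤ f p).card := by
  have hcard : Multiset.card (F.val.map f) = F.card := by
    rw [Multiset.card_map]; rfl
  have h := (kthLargest_spec hk1 (by rw [hcard]; exact hk)).2
  rw [Multiset.countP_map] at h
  have he : (F.filter fun p => kthLargest (F.val.map f) k ≤ f p).card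
      = Multiset.card (Multiset.filter (fun a => kthLargest (F.val.map f) k ≤ f a) F.val) := by
    rw [show (F.filter fun p => kthLargest (F.val.map f) k ≤ f p).card
        = Multiset.card ((F.filter fun p => kthLargest (F.val.map f) k ≤ f p).val) from rfl,
      Finset.filter_val]
  rw [he]
  exact h

lemma kthLargest_mem_map {ι : Type*} (F : Finset ι) (f : ι → ℝ) {k : ℕ} (hk1 : 1 ≤ k)
    (hk : k ≤ F.card) : ∃ a ∈ F, kthLargest (F.val.map f) k = f a := by
  have hcard : Multiset.card (F.val.map f) = F.card := by
    rw [Multiset.card_map]; rfl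
  have h := (kthLargest_spec hk1 (by rw [hcard]; exact hk)).1
  obtain ⟨a, ha, he⟩ := Multiset.mem_map.mp h
  exact ⟨a, ha, he.symm⟩

lemma fiber_bound {ι : Type*} [DecidableEq ι] {F C T : Finset ι} (hCF : C ⊆ F) (hTC : T ⊆ C)
    {f g : ι → ℝ} (hf0 : ∀ p, 0 ≤ f p) (hg0 : ∀ p, 0 ≤ g p)
    (hfg : ∀ p ∈ F, p ∉ C → f p ≤ g p)
    {α γ : ℝ} (hα0 : 0 < α) (hγ1 : 1 < γ) (hγα : γ * α ≤ 1)
    (hC : (C.card : ℝ) ≤ α * F.card)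
    (hT : ∀ p ∈ T, f p ≤ kthLargest (F.val.map f) ⌈γ * α * (F.card : ℝ)⌉₊) :
    ∑ p ∈ T, f p ^ 2 ≤ (γ - 1)⁻¹ * ∑ p ∈ F, g p ^ 2 := by
  have hTF : T ⊆ F := hTC.trans hCF
  have hSnn : (0:ℝ) ≤ ∑ p ∈ F, g p ^ 2 := Finset.sum_nonneg fun p _ => sq_nonneg _
  rcases Finset.eq_empty_or_nonempty F with hF | hF
  · have : T = ∅ := Finset.subset_empty.mp (hF ▸ hTF)
    simp [this, hF]
  have hN : (0:ℝ) < F.card := by exact_mod_cast Finset.card_pos.mpr hF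
  set k := ⌈γ * α * (F.card : ℝ)⌉₊ with hkdef
  have hpos : (0:ℝ) < γ * α * F.card := by positivity
  have hk1 : 1 ≤ k := Nat.one_le_iff_ne_zero.mpr (Nat.pos_iff_ne_zero.mp (Nat.ceil_pos.mpr hpos))
  have hkN : k ≤ F.card := Nat.ceil_le.mpr (by nlinarith)
  have hkge : γ * α * (F.card : ℝ) ≤ k := Nat.le_ceil _
  set t := kthLargest (F.val.map f) k with htdef
  obtain ⟨a, _, hat⟩ := kthLargest_mem_map F f hk1 hkN
  have ht0 : 0 ≤ t := by rw [htdef, hat]; exact hf0 a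
  set G := F.filter fun p => t ≤ f p with hGdef
  have hGk : k ≤ G.card := card_filter_ge F f hk1 hkN
  have hGC : (G.card : ℝ) - C.card ≤ ((G \ C).card : ℝ) := by
    have := Finset.card_le_card_sdiff_add_card (s := G) (t := C)
    have h2 : (G.card : ℝ) ≤ (G \ C).card + C.card := by exact_mod_cast this
    linarith
  have hsum1 : ((G \ C).card : ℝ) * t ^ 2 ≤ ∑ p ∈ F, g p ^ 2 := by
    have h1 : ∑ p ∈ G \ C, t ^ 2 ≤ ∑ p ∈ G \ C, g p ^ 2 := by
      apply Finset.sum_le_sum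
      intro p hp
      have hpG : p ∈ G := (Finset.mem_sdiff.mp hp).1
      have hpC : p ∉ C := (Finset.mem_sdiff.mp hp).2
      have hpF : p ∈ F := Finset.filter_subset _ _ hpG
      have htf : t ≤ f p := (Finset.mem_filter.mp hpG).2
      have : t ≤ g p := htf.trans (hfg p hpF hpC)
      exact pow_le_pow_left₀ ht0 this 2
    have h2 : ∑ p ∈ G \ C, g p ^ 2 ≤ ∑ p ∈ F, g p ^ 2 := by
      apply Finset.sum_le_sum_of_subset_of_nonneg
      · exact (Finset.sdiff_subset).trans (Finset.filter_subset _ _)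
      · intro p _ _; exact sq_nonneg _
    simpa using h1.trans h2
  have hbeta : (γ - 1) * α * (F.card : ℝ) ≤ ((G \ C).card : ℝ) := by
    have : (k : ℝ) ≤ G.card := by exact_mod_cast hGk
    nlinarith
  have hkey : ((γ - 1) * α * (F.card : ℝ)) * t ^ 2 ≤ ∑ p ∈ F, g p ^ 2 := by
    have := mul_le_mul_of_nonneg_right hbeta (sq_nonneg t)
    linarith
  have hsum2 : ∑ p ∈ T, f p ^ 2 ≤ (C.card : ℝ) * t ^ 2 := by
    calc ∑ p ∈ T, f p ^ 2 ≤ ∑ p ∈ T, t ^ 2 := by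
          apply Finset.sum_le_sum
          intro p hp
          exact pow_le_pow_left₀ (hf0 p) (hT p hp) 2
      _ = (T.card : ℝ) * t ^ 2 := by rw [Finset.sum_const, nsmul_eq_mul]
      _ ≤ (C.card : ℝ) * t ^ 2 := by
          apply mul_le_mul_of_nonneg_right _ (sq_nonneg t)
          exact_mod_cast Finset.card_le_card hTC
  have hfin : (C.card : ℝ) * t ^ 2 ≤ (γ - 1)⁻¹ * ∑ p ∈ F, g p ^ 2 := by
    rw [inv_mul_eq_div, le_div_iff₀ (by linarith : (0:ℝ) < γ - 1)]
    calc (C.card : ℝ) * t ^ 2 * (γ - 1) ≤ (α * F.card) * t ^ 2 * (γ - 1) :=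
          mul_le_mul_of_nonneg_right (mul_le_mul_of_nonneg_right hC (sq_nonneg t)) (by linarith)
      _ = ((γ - 1) * α * (F.card : ℝ)) * t ^ 2 := by ring
      _ ≤ _ := hkey
  exact hsum2.trans hfin


lemma main_aux {n1 n2 : ℕ} (A D : Matrix (Fin n1) (Fin n2) ℝ)
    (Ω Λstar : Finset (Fin n1 × Fin n2)) (hΛΩ : Λstar ⊆ Ω)
    (hAD : ∀ p : Fin n1 × Fin n2, p ∉ Λstar → A p.1 p.2 = D p.1 p.2)
    (α γ : ℝ) (hα0 : 0 < α) (hγ1 : 1 < γ) (hγα' : γ * α ≤ 1)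
    (hrow : ∀ i : Fin n1,
      ((Λstar.filter fun p => p.1 = i).card : ℝ) ≤
        α * ((Ω.filter fun p => p.1 = i).card : ℝ))
    (hcol : ∀ j : Fin n2,
      ((Λstar.filter fun p => p.2 = j).card : ℝ) ≤
        α * ((Ω.filter fun p => p.2 = j).card : ℝ)) :
    frobS ((Ω \ threshSupport A Ω (γ * α)) ∩ Λstar) A ≤
      Real.sqrt (2 / (γ - 1)) * frobS Ω D := by
  obtain ⟨f, hf⟩ : ∃ f : Fin n1 × Fin n2 → ℝ, f = fun p => |A p.1 p.2| := ⟨_, rfl⟩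
  obtain ⟨g, hg⟩ : ∃ g : Fin n1 × Fin n2 → ℝ, g = fun p => |D p.1 p.2| := ⟨_, rfl⟩
  obtain ⟨T, hT⟩ : ∃ T, T = (Ω \ threshSupport A Ω (γ * α)) ∩ Λstar := ⟨_, rfl⟩
  obtain ⟨rowT, hrowT⟩ : ∃ rowT : Fin n1 × Fin n2 → ℝ, rowT = fun p =>
      kthLargest (((Ω.filter fun q => q.1 = p.1).val.map fun q => |A q.1 q.2|))
        ⌈γ * α * ((Ω.filter fun q => q.1 = p.1).card : ℝ)⌉₊ := ⟨_, rfl⟩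
  obtain ⟨colT, hcolT⟩ : ∃ colT : Fin n1 × Fin n2 → ℝ, colT = fun p =>
      kthLargest (((Ω.filter fun q => q.2 = p.2).val.map fun q => |A q.1 q.2|))
        ⌈γ * α * ((Ω.filter fun q => q.2 = p.2).card : ℝ)⌉₊ := ⟨_, rfl⟩
  obtain ⟨Trow, hTrow⟩ : ∃ Trow, Trow = T.filter (fun p => f p ≤ rowT p) := ⟨_, rfl⟩
  have hf0 : ∀ p, 0 ≤ f p := fun p => by rw [hf]; exact abs_nonneg _
  have hg0 : ∀ p, 0 ≤ g p := fun p => by rw [hg]; exact abs_nonneg _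
  have hfg : ∀ p : Fin n1 × Fin n2, p ∉ Λstar → f p = g p := by
    intro p hp
    rw [hf, hg]
    simp only [hAD p hp]
  have hTmem : ∀ p ∈ T, f p ≤ rowT p ∨ f p ≤ colT p := by
    intro p hp
    rw [hT, Finset.mem_inter, Finset.mem_sdiff] at hp
    obtain ⟨⟨hpΩ, hpns⟩, hpΛ⟩ := hp
    by_contra hcon
    push_neg at hcon
    apply hpns
    simp only [hrowT, hcolT, hf] at hcon
    simp only [threshSupport, Finset.mem_filter, Finset.filter_congr_decidable]
    exact ⟨hpΩ, hcon.1, hcon.2⟩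
  have hTsubΛ : T ⊆ Λstar := by rw [hT]; exact Finset.inter_subset_right
  have hTrowsub : Trow ⊆ T := by rw [hTrow]; exact Finset.filter_subset _ _
  have hrowbd : ∑ p ∈ Trow, f p ^ 2 ≤ (γ - 1)⁻¹ * ∑ p ∈ Ω, g p ^ 2 := by
    have heq : ∑ p ∈ Trow, f p ^ 2
        = ∑ i : Fin n1, ∑ p ∈ Trow.filter (fun p => p.1 = i), f p ^ 2 :=
      (Finset.sum_fiberwise Trow Prod.fst (fun p => f p ^ 2)).symm
    have heq2 : ∑ p ∈ Ω, g p ^ 2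
        = ∑ i : Fin n1, ∑ p ∈ Ω.filter (fun p => p.1 = i), g p ^ 2 :=
      (Finset.sum_fiberwise Ω Prod.fst (fun p => g p ^ 2)).symm
    rw [heq, heq2, Finset.mul_sum]
    apply Finset.sum_le_sum
    intro i _
    have h1 : Λstar.filter (fun p => p.1 = i) ⊆ Ω.filter (fun p => p.1 = i) :=
      Finset.filter_subset_filter _ hΛΩ
    have h2 : Trow.filter (fun p => p.1 = i) ⊆ Λstar.filter (fun p => p.1 = i) :=
      Finset.filter_subset_filter _ (hTrowsub.trans hTsubΛ)
    have h3 : ∀ p ∈ Ω.filter (fun p => p.1 = i),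
        p ∉ Λstar.filter (fun p => p.1 = i) → f p ≤ g p := by
      intro p hpF hpC
      have hp1 : p.1 = i := (Finset.mem_filter.mp hpF).2
      have : p ∉ Λstar := fun h => hpC (Finset.mem_filter.mpr ⟨h, hp1⟩)
      exact (hfg p this).le
    have h4 : ∀ p ∈ Trow.filter (fun p => p.1 = i), f p ≤ kthLargest
        (((Ω.filter (fun p => p.1 = i)).val.map f))
        ⌈γ * α * (((Ω.filter (fun p => p.1 = i)).card : ℝ))⌉₊ := by
      intro p hp
      have hp1 : p.1 = i := (Finset.mem_filter.mp hp).2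
      have hpT : p ∈ Trow := (Finset.mem_filter.mp hp).1
      rw [hTrow, Finset.mem_filter] at hpT
      have hle : f p ≤ rowT p := hpT.2
      rw [hrowT] at hle
      simp only [hp1] at hle
      rw [← hf] at hle
      exact hle
    exact fiber_bound h1 h2 hf0 hg0 h3 hα0 hγ1 hγα' (hrow i) h4
  have hcolbd : ∑ p ∈ T \ Trow, f p ^ 2 ≤ (γ - 1)⁻¹ * ∑ p ∈ Ω, g p ^ 2 := by
    have heq : ∑ p ∈ T \ Trow, f p ^ 2
        = ∑ j : Fin n2, ∑ p ∈ (T \ Trow).filter (fun p => p.2 = j), f p ^ 2 :=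
      (Finset.sum_fiberwise _ Prod.snd (fun p => f p ^ 2)).symm
    have heq2 : ∑ p ∈ Ω, g p ^ 2
        = ∑ j : Fin n2, ∑ p ∈ Ω.filter (fun p => p.2 = j), g p ^ 2 :=
      (Finset.sum_fiberwise Ω Prod.snd (fun p => g p ^ 2)).symm
    rw [heq, heq2, Finset.mul_sum]
    apply Finset.sum_le_sum
    intro j _
    have h1 : Λstar.filter (fun p => p.2 = j) ⊆ Ω.filter (fun p => p.2 = j) :=
      Finset.filter_subset_filter _ hΛΩ
    have h2 : (T \ Trow).filter (fun p => p.2 = j) ⊆ Λstar.filter (fun p => p.2 = j) :=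
      Finset.filter_subset_filter _ ((Finset.sdiff_subset).trans hTsubΛ)
    have h3 : ∀ p ∈ Ω.filter (fun p => p.2 = j),
        p ∉ Λstar.filter (fun p => p.2 = j) → f p ≤ g p := by
      intro p hpF hpC
      have hp2 : p.2 = j := (Finset.mem_filter.mp hpF).2
      have : p ∉ Λstar := fun h => hpC (Finset.mem_filter.mpr ⟨h, hp2⟩)
      exact (hfg p this).le
    have h4 : ∀ p ∈ (T \ Trow).filter (fun p => p.2 = j), f p ≤ kthLargest
        (((Ω.filter (fun p => p.2 = j)).val.map f))
        ⌈γ * α * (((Ω.filter (fun p => p.2 = j)).card : ℝ))⌉₊ := by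
      intro p hp
      have hp2 : p.2 = j := (Finset.mem_filter.mp hp).2
      have hpT : p ∈ T \ Trow := (Finset.mem_filter.mp hp).1
      have hpT' : p ∈ T := (Finset.mem_sdiff.mp hpT).1
      have hpn : p ∉ Trow := (Finset.mem_sdiff.mp hpT).2
      have hle : f p ≤ colT p := by
        rcases hTmem p hpT' with h | h
        · exact absurd (by rw [hTrow, Finset.mem_filter]; exact ⟨hpT', h⟩) hpn
        · exact h
      rw [hcolT] at hle
      simp only [hp2] at hle
      rw [← hf] at hle
      exact hle
    exact fiber_bound h1 h2 hf0 hg0 h3 hα0 hγ1 hγα' (hcol j) h4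
  have hSnn : (0:ℝ) ≤ ∑ p ∈ Ω, g p ^ 2 := Finset.sum_nonneg fun p _ => sq_nonneg _
  have htot : ∑ p ∈ T, f p ^ 2 ≤ (2 / (γ - 1)) * ∑ p ∈ Ω, g p ^ 2 := by
    have hsplit : ∑ p ∈ T \ Trow, f p ^ 2 + ∑ p ∈ Trow, f p ^ 2 = ∑ p ∈ T, f p ^ 2 :=
      Finset.sum_sdiff hTrowsub
    have h2 : (γ - 1)⁻¹ * ∑ p ∈ Ω, g p ^ 2 + (γ - 1)⁻¹ * ∑ p ∈ Ω, g p ^ 2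
        = (2 / (γ - 1)) * ∑ p ∈ Ω, g p ^ 2 := by ring
    linarith
  have hgoal : ∑ p ∈ T, (A p.1 p.2) ^ 2 ≤ (2 / (γ - 1)) * ∑ p ∈ Ω, (D p.1 p.2) ^ 2 := by
    have h1 : ∑ p ∈ T, (A p.1 p.2) ^ 2 = ∑ p ∈ T, f p ^ 2 := by
      apply Finset.sum_congr rfl; intro p _; rw [hf]; simp [sq_abs]
    have h2 : ∑ p ∈ Ω, (D p.1 p.2) ^ 2 = ∑ p ∈ Ω, g p ^ 2 := by
      apply Finset.sum_congr rfl; intro p _; rw [hg]; simp [sq_abs]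
    rw [h1, h2]; exact htot
  unfold frobS
  rw [← hT]
  calc Real.sqrt (∑ p ∈ T, (A p.1 p.2) ^ 2)
      ≤ Real.sqrt ((2 / (γ - 1)) * ∑ p ∈ Ω, (D p.1 p.2) ^ 2) := Real.sqrt_le_sqrt hgoal
    _ = Real.sqrt (2 / (γ - 1)) * Real.sqrt (∑ p ∈ Ω, (D p.1 p.2) ^ 2) :=
      Real.sqrt_mul (div_nonneg (by norm_num) (by linarith)) _


/-- If in each row and column at most an `α`-fraction of the observed entries are
corrupted, and `Λ` is obtained by thresholding `L − X` over `Ω` with over-removal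
factor `γ ∈ (1, 1/α]`, then the error on the remaining corrupted entries satisfies
`‖L − X‖_{F((Ω\Λ)∩Λ*)} ≤ √(2/(γ−1)) · ‖L − L*‖_{F(Ω)}`. -/
theorem corrupted_observed_error_bound {n1 n2 : ℕ}
    (Lstar Sstar L : Matrix (Fin n1) (Fin n2) ℝ)
    (X : Matrix (Fin n1) (Fin n2) ℝ) (hX : X = Lstar + Sstar)
    (Ω Λstar : Finset (Fin n1 × Fin n2)) (hΛΩ : Λstar ⊆ Ω)
    (hsupp : ∀ p : Fin n1 × Fin n2, p ∉ Λstar → Sstar p.1 p.2 = 0)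
    (α γ : ℝ) (hα0 : 0 < α) (hα1 : α < 1) (hγ1 : 1 < γ) (hγα : γ ≤ 1 / α)
    (hrow : ∀ i : Fin n1,
      ((Λstar.filter fun p => p.1 = i).card : ℝ) ≤
        α * ((Ω.filter fun p => p.1 = i).card : ℝ))
    (hcol : ∀ j : Fin n2,
      ((Λstar.filter fun p => p.2 = j).card : ℝ) ≤
        α * ((Ω.filter fun p => p.2 = j).card : ℝ)) :
    frobS ((Ω \ threshSupport (L - X) Ω (γ * α)) ∩ Λstar) (L - X) ≤
      Real.sqrt (2 / (γ - 1)) * frobS Ω (L - Lstar) := by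
  have hγα' : γ * α ≤ 1 := by
    have := (le_div_iff₀ hα0).mp hγα
    linarith
  apply main_aux (L - X) (L - Lstar) Ω Λstar hΛΩ ?_ α γ hα0 hγ1 hγα' hrow hcol
  intro p hp
  simp [hX, Matrix.sub_apply, Matrix.add_apply, hsupp p hp]
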